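/- Let A be a commutative ring, m ≥ 1, and let d, n, s be integers with C(d+m−1, m) < n ≤ C(d+m, m) and s = C(d+m, m) − n, where C denotes the binomial coefficient. Enumerate the monomials m_1, m_2, … of the polynomial ring A[Y_1, …, Y_m] in order of increasing total degree and lexicographically within each degree, so that m_1, …, m_{C(d+m,m)} are exactly the monomials of degree at most d and m_{C(d+m−1,m)+1}, …, m_{C(d+m,m)} those of degree exactly d. For each family a = (a_{ij}) of elements of A indexed by i ∈ {n+1, …, C(d+m,m)} and j ∈ {C(d+m−1,m)+1, …, n}, let I_a be the ideal of A[Y_1, …, Y_m] generated by all monomials of degree strictly greater than d together with the polynomials m_i − Σ_{j=C(d+m−1,m)+1}^{n} a_{ij}·m_j for i = n+1, …, C(d+m,m). Then for each a the images of m_1, …, m_n form a basis of the A-module A[Y_1, …, Y_m]/I_a, and the assignment a ↦ I_a is injective. -/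
import Mathlib


/-- The ideal `I_a` of `A[Y_1, …, Y_m]` generated by all monomials of degree `> d`
together with the polynomials `m_i − ∑_j a_{ij}·m_j` for `i = n+1, …, C(d+m, m)`,
where `j` runs over `C(d+m−1, m)+1, …, n` and `m_i` denotes the `i`-th monomial in the
enumeration `μ`. -/
noncomputable def degenIdeal {A : Type*} [CommRing A] (m : ℕ)
    (μ : ℕ → (Fin m →₀ ℕ)) (d n : ℕ) (a : ℕ → ℕ → A) :
    Ideal (MvPolynomial (Fin m) A) :=
  Ideal.span
    ({q | ∃ f : Fin m →₀ ℕ, d < f.sum (fun _ e => e) ∧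
        q = MvPolynomial.monomial f (1 : A)} ∪
     {q | ∃ i ∈ Finset.Ioc n ((d + m).choose m),
        q = MvPolynomial.monomial (μ i) (1 : A) -
          ∑ j ∈ Finset.Ioc ((d + m - 1).choose m) n,
            MvPolynomial.C (a i j) * MvPolynomial.monomial (μ j) (1 : A)})


open MvPolynomial in
lemma card_degree_le (m e : ℕ) :
    Nat.card {f : Fin m →₀ ℕ // f.sum (fun _ x => x) ≤ e} = (e + m).choose m := by
  have E1 : {f : Fin m →₀ ℕ // f.sum (fun _ x => x) ≤ e} ≃ {v : Fin m → ℕ // ∑ i, v i ≤ e} :=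
    Equiv.subtypeEquiv Finsupp.equivFunOnFinite (fun f => by
      rw [Finsupp.sum_fintype _ _ (fun _ => rfl)]; rfl)
  have E2 : {v : Fin m → ℕ // ∑ i, v i ≤ e} ≃ {w : Fin (m+1) → ℕ // ∑ i, w i = e} :=
    { toFun := fun v => ⟨Fin.cons (e - ∑ i, v.1 i) v.1, by
        rw [Fin.sum_cons]; have := v.2; omega⟩
      invFun := fun w => ⟨fun i => w.1 i.succ, by
        show (∑ i : Fin m, w.1 i.succ) ≤ e
        have := w.2; rw [Fin.sum_univ_succ] at this; omega⟩
      left_inv := fun v => by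
        ext i; simp [Fin.cons_succ]
      right_inv := fun w => by
        ext i
        refine Fin.cases ?_ ?_ i
        · have := w.2; rw [Fin.sum_univ_succ] at this
          simp only [Fin.cons_zero]; omega
        · intro j; simp [Fin.cons_succ] }
  have E3 : {w : Fin (m+1) → ℕ // ∑ i, w i = e} ≃
      {g : Fin (m+1) →₀ ℕ // g.sum (fun _ x => x) = e} :=
    (Equiv.subtypeEquiv Finsupp.equivFunOnFinite (fun g => by
      rw [Finsupp.sum_fintype _ _ (fun _ => rfl)]; rfl)).symm
  have hcs : ∀ s : Multiset (Fin (m+1)),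
      (Multiset.toFinsupp s).sum (fun _ x => x) = Multiset.card s := fun s => by
    rw [show ((fun _ x => x) : Fin (m+1) → ℕ → ℕ) = (fun _ => id) from rfl,
      ← Finsupp.card_toMultiset, Multiset.toFinsupp_toMultiset]
  have E4 : Sym (Fin (m+1)) e ≃ {g : Fin (m+1) →₀ ℕ // g.sum (fun _ x => x) = e} :=
    Equiv.subtypeEquiv Multiset.toFinsupp.toEquiv (fun s => by
      change Multiset.card s = e ↔ (Multiset.toFinsupp s).sum (fun _ x => x) = e
      rw [hcs])
  rw [Nat.card_congr (((E1.trans E2).trans E3).trans E4.symm), Nat.card_eq_fintype_card,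
    Sym.card_sym_eq_choose]
  simp only [Fintype.card_fin]
  have h1 : m + 1 + e - 1 = e + m := by omega
  rw [h1, ← Nat.choose_symm (by omega : e ≤ e + m)]
  congr 1
  omega

lemma seg_iff {m : ℕ} (μ : ℕ → (Fin m →₀ ℕ))
    (hbij : Set.BijOn μ {i : ℕ | 1 ≤ i} Set.univ)
    (hmono : ∀ k l : ℕ, 1 ≤ k → k ≤ l →
      (μ k).sum (fun _ x => x) ≤ (μ l).sum (fun _ x => x))
    (e : ℕ) : ∀ i, 1 ≤ i →
      ((μ i).sum (fun _ x => x) ≤ e ↔ i ≤ (e + m).choose m) := by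
  set V : Set ℕ := {k | (μ (k+1)).sum (fun _ x => x) ≤ e} with hV
  have hVmono : ∀ k l : ℕ, k ≤ l → l ∈ V → k ∈ V := fun k l hkl hl =>
    le_trans (hmono (k+1) (l+1) (by omega) (by omega)) hl
  have hinj : Set.InjOn μ {i : ℕ | 1 ≤ i} := hbij.injOn
  have hSfin : {f : Fin m →₀ ℕ | f.sum (fun _ x => x) ≤ e}.Finite := by
    rw [← Set.finite_coe_iff]
    refine Nat.finite_of_card_ne_zero ?_
    rw [Set.coe_setOf, card_degree_le]
    exact (Nat.choose_pos (by omega)).ne'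
  have hVfin : V.Finite := by
    have hVeq : V = (fun k => μ (k+1)) ⁻¹' {f | f.sum (fun _ x => x) ≤ e} := rfl
    rw [hVeq]
    refine Set.Finite.preimage ?_ hSfin
    intro k _ l _ h
    have := hinj (show k + 1 ∈ {i : ℕ | 1 ≤ i} by simp) (show l + 1 ∈ {i : ℕ | 1 ≤ i} by simp) h
    omega
  have himg : (fun k => μ (k+1)) '' V = {f | f.sum (fun _ x => x) ≤ e} := by
    apply Set.Subset.antisymm
    · rintro _ ⟨k, hk, rfl⟩; exact hk
    · intro f hf
      obtain ⟨i, hi1, rfl⟩ := hbij.surjOn (Set.mem_univ f)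
      have hi1' : 1 ≤ i := hi1
      refine ⟨i - 1, ?_, by show μ (i - 1 + 1) = μ i; rw [Nat.sub_add_cancel hi1']⟩
      show (μ (i - 1 + 1)).sum (fun _ x => x) ≤ e
      rw [Nat.sub_add_cancel hi1']; exact hf
  have hcard : V.ncard = (e + m).choose m := by
    have h1 : ((fun k => μ (k+1)) '' V).ncard = V.ncard := by
      apply Set.ncard_image_of_injOn
      intro k hk l hl h
      have := hinj (show k + 1 ∈ {i : ℕ | 1 ≤ i} by simp)
        (show l + 1 ∈ {i : ℕ | 1 ≤ i} by simp) h
      omega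
    rw [← h1, himg, ← Nat.card_coe_set_eq, Set.coe_setOf, card_degree_le]
  have key : ∀ k, k ∈ V ↔ k < (e + m).choose m := by
    intro k
    constructor
    · intro hk
      have hsub : Set.Iic k ⊆ V := fun l hl => hVmono l k hl hk
      have hle := Set.ncard_le_ncard hsub hVfin
      rw [← Finset.coe_Iic, Set.ncard_coe_finset, Nat.card_Iic] at hle
      omega
    · intro hk
      by_contra hkV
      have hsub : V ⊆ Set.Iio k := by
        intro l hl
        by_contra hlk
        exact hkV (hVmono k l (le_of_not_gt (by simpa using hlk)) hl)
      have hle := Set.ncard_le_ncard hsub (Set.finite_Iio k)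
      rw [← Finset.coe_Iio, Set.ncard_coe_finset, Nat.card_Iio] at hle
      omega
  intro i hi
  have hk := key (i - 1)
  rw [hV] at hk
  simp only [Set.mem_setOf_eq, Nat.sub_add_cancel hi] at hk
  rw [hk]
  omega

open MvPolynomial

section Phi

variable {A : Type*} [CommRing A]

/-- The target coefficient row for index `i`. -/
def auxW (c n : ℕ) (a : ℕ → ℕ → A) (i : ℕ) : Fin n → A :=
  fun t => if i ≤ n then (if (t : ℕ) + 1 = i then 1 else 0)
    else (if c < (t : ℕ) + 1 then a i ((t : ℕ) + 1) else 0)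

/-- The coefficient-reading linear map. -/
noncomputable def auxPhi (m : ℕ) (μ : ℕ → (Fin m →₀ ℕ)) (c n N : ℕ) (a : ℕ → ℕ → A) :
    MvPolynomial (Fin m) A →ₗ[A] (Fin n → A) :=
  ∑ i ∈ Finset.Icc 1 N, (MvPolynomial.lcoeff A (μ i)).smulRight (auxW c n a i)

variable {m : ℕ} {μ : ℕ → (Fin m →₀ ℕ)} {c n N : ℕ} {a : ℕ → ℕ → A}

lemma auxPhi_apply (p : MvPolynomial (Fin m) A) :
    auxPhi m μ c n N a p = ∑ i ∈ Finset.Icc 1 N, MvPolynomial.coeff (μ i) p • auxW c n a i := by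
  simp [auxPhi, LinearMap.sum_apply]

lemma auxPhi_monomial (hinj : Set.InjOn μ {i : ℕ | 1 ≤ i}) {i : ℕ}
    (hi1 : 1 ≤ i) (hiN : i ≤ N) :
    auxPhi m μ c n N a (monomial (μ i) 1) = auxW c n a i := by
  rw [auxPhi_apply, Finset.sum_eq_single i]
  · rw [MvPolynomial.coeff_monomial, if_pos rfl, one_smul]
  · intro b hb hbi
    rw [Finset.mem_Icc] at hb
    rw [MvPolynomial.coeff_monomial, if_neg, zero_smul]
    intro h
    exact hbi (hinj (show i ∈ {i : ℕ | 1 ≤ i} from hi1)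
      (show b ∈ {i : ℕ | 1 ≤ i} from hb.1) h).symm
  · intro h
    exact absurd (Finset.mem_Icc.mpr ⟨hi1, hiN⟩) h

lemma auxPhi_high {d : ℕ}
    (hdeg : ∀ i, 1 ≤ i → i ≤ N → (μ i).sum (fun _ x => x) ≤ d)
    {f : Fin m →₀ ℕ} (hf : d < f.sum (fun _ x => x)) :
    auxPhi m μ c n N a (monomial f 1) = 0 := by
  rw [auxPhi_apply]
  apply Finset.sum_eq_zero
  intro i hi
  rw [Finset.mem_Icc] at hi
  rw [MvPolynomial.coeff_monomial, if_neg, zero_smul]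
  intro h
  rw [h] at hf
  exact absurd (hdeg i hi.1 hi.2) (not_le.mpr hf)

lemma auxW_sum (b : ℕ → A) :
    ∑ j ∈ Finset.Ioc c n, b j • auxW c n a j
      = (fun t : Fin n => if c < (t : ℕ) + 1 then b ((t : ℕ) + 1) else 0) := by
  funext t
  rw [Finset.sum_apply]
  have hstep : ∀ j ∈ Finset.Ioc c n,
      (b j • auxW c n a j) t = if (t : ℕ) + 1 = j then b j else 0 := by
    intro j hj
    rw [Finset.mem_Ioc] at hj
    simp only [Pi.smul_apply, auxW, if_pos hj.2, smul_eq_mul]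
    split_ifs <;> simp
  rw [Finset.sum_congr rfl hstep, Finset.sum_ite_eq]
  have ht := t.isLt
  have hmem : ((t : ℕ) + 1 ∈ Finset.Ioc c n) ↔ c < (t : ℕ) + 1 := by
    rw [Finset.mem_Ioc]; omega
  rw [if_congr hmem rfl rfl]

lemma auxW_high {i : ℕ} (hi : n < i) :
    auxW c n a i = (fun t : Fin n => if c < (t : ℕ) + 1 then a i ((t : ℕ) + 1) else 0) := by
  funext t
  rw [auxW, if_neg (by omega)]

lemma auxPhi_gen (hinj : Set.InjOn μ {i : ℕ | 1 ≤ i}) (hnN : n ≤ N)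
    {i : ℕ} (hi : i ∈ Finset.Ioc n N) (b : ℕ → ℕ → A) :
    auxPhi m μ c n N a (monomial (μ i) 1 -
        ∑ j ∈ Finset.Ioc c n, MvPolynomial.C (b i j) * monomial (μ j) 1)
      = (fun t : Fin n => if c < (t : ℕ) + 1
          then a i ((t : ℕ) + 1) - b i ((t : ℕ) + 1) else 0) := by
  rw [Finset.mem_Ioc] at hi
  have hCmul : ∀ j, MvPolynomial.C (b i j) * monomial (μ j) (1 : A)
      = b i j • monomial (μ j) (1 : A) := by
    intro j
    rw [MvPolynomial.C_mul', MvPolynomial.smul_monomial]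
  simp only [hCmul]
  rw [map_sub, map_sum]
  have hmm : ∀ j ∈ Finset.Ioc c n,
      auxPhi m μ c n N a (b i j • monomial (μ j) (1 : A)) = b i j • auxW c n a j := by
    intro j hj
    rw [Finset.mem_Ioc] at hj
    rw [map_smul, auxPhi_monomial hinj (by omega) (by omega)]
  rw [Finset.sum_congr rfl hmm, auxW_sum (b i),
    auxPhi_monomial hinj (by omega) (by omega), auxW_high hi.1]
  funext t
  simp only [Pi.sub_apply]
  split_ifs <;> simp

end Phi

lemma mono_span {A : Type*} [CommRing A] {m : ℕ} (p : MvPolynomial (Fin m) A) :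
    p ∈ Submodule.span A (Set.range fun f : Fin m →₀ ℕ => monomial f (1 : A)) := by
  rw [MvPolynomial.as_sum p]
  refine Submodule.sum_mem _ ?_
  intro v hv
  have : monomial v (MvPolynomial.coeff v p)
      = MvPolynomial.coeff v p • monomial v (1 : A) := by
    rw [MvPolynomial.smul_monomial, smul_eq_mul, mul_one]
  rw [this]
  exact Submodule.smul_mem _ _ (Submodule.subset_span ⟨v, rfl⟩)

lemma sum_pos_of_ne_zero {m : ℕ} {f : Fin m →₀ ℕ} (hf : f ≠ 0) :
    0 < f.sum (fun _ x => x) := by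
  obtain ⟨x, hx⟩ : ∃ x, f x ≠ 0 := by
    by_contra h
    push_neg at h
    exact hf (Finsupp.ext h)
  have hxs : x ∈ f.support := Finsupp.mem_support_iff.mpr hx
  have hle : f x ≤ ∑ y ∈ f.support, f y :=
    Finset.single_le_sum (f := fun a => f a) (fun _ _ => Nat.zero_le _) hxs
  rw [Finsupp.sum]
  omega

lemma deg_add {m : ℕ} (f g : Fin m →₀ ℕ) :
    (f + g).sum (fun _ x => x) = f.sum (fun _ x => x) + g.sum (fun _ x => x) :=
  Finsupp.sum_add_index' (fun _ => rfl) (fun _ _ _ => rfl)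

lemma mem_ker {A : Type*} [CommRing A] {m : ℕ} {μ : ℕ → (Fin m →₀ ℕ)}
    {d n : ℕ} {a : ℕ → ℕ → A}
    (hinj : Set.InjOn μ {i : ℕ | 1 ≤ i})
    (hdeg : ∀ i, 1 ≤ i → i ≤ (d + m).choose m → (μ i).sum (fun _ x => x) ≤ d)
    (hdeq : ∀ i, (d + m - 1).choose m < i → i ≤ (d + m).choose m →
      (μ i).sum (fun _ x => x) = d)
    (hcn : (d + m - 1).choose m < n) (hnN : n ≤ (d + m).choose m) :
    ∀ p ∈ degenIdeal m μ d n a,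
      auxPhi m μ ((d + m - 1).choose m) n ((d + m).choose m) a p = 0 := by
  set c := (d + m - 1).choose m with hc
  set N := (d + m).choose m with hN
  intro p hp
  have main : ∀ q, auxPhi m μ c n N a (q * p) = 0 := by
    unfold degenIdeal at hp
    refine Submodule.span_induction (p := fun x _ => ∀ q, auxPhi m μ c n N a (q * x) = 0)
      ?_ ?_ ?_ ?_ hp
    · -- generators
      intro g hg q
      -- first reduce to q a monomial
      have hmono : ∀ f : Fin m →₀ ℕ, auxPhi m μ c n N a ((monomial f 1) * g) = 0 := by
        intro f
        rcases hg with ⟨f', hf', rfl⟩ | ⟨i, hi, rfl⟩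
        · rw [MvPolynomial.monomial_mul, mul_one]
          exact auxPhi_high hdeg (by rw [deg_add]; omega)
        · rw [Finset.mem_Ioc] at hi
          by_cases hf0 : f = 0
          · subst hf0
            rw [show monomial (0 : Fin m →₀ ℕ) (1 : A) = 1 by
              rw [MvPolynomial.monomial_zero']; exact map_one _, one_mul]
            rw [auxPhi_gen hinj hnN (Finset.mem_Ioc.mpr hi) a]
            funext t
            split_ifs <;> simp
          · have hfpos := sum_pos_of_ne_zero hf0
            rw [mul_sub, Finset.mul_sum]
            rw [map_sub, map_sum]
            have h1 : auxPhi m μ c n N a ((monomial f 1) * monomial (μ i) 1) = 0 := by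
              rw [MvPolynomial.monomial_mul, mul_one]
              refine auxPhi_high hdeg ?_
              rw [deg_add, hdeq i (by omega) hi.2]
              omega
            have h2 : ∀ j ∈ Finset.Ioc c n,
                auxPhi m μ c n N a ((monomial f 1) *
                  (MvPolynomial.C (a i j) * monomial (μ j) 1)) = 0 := by
              intro j hj
              rw [Finset.mem_Ioc] at hj
              have heq : (monomial f (1 : A)) * (MvPolynomial.C (a i j) * monomial (μ j) 1)
                  = a i j • ((monomial f 1) * monomial (μ j) 1) := by
                rw [MvPolynomial.C_mul', mul_smul_comm]
              rw [heq, map_smul, MvPolynomial.monomial_mul, mul_one]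
              rw [auxPhi_high hdeg (by rw [deg_add, hdeq j (by omega) (by omega)]; omega),
                smul_zero]
            rw [h1, Finset.sum_congr rfl h2]
            simp
      -- extend by linearity
      have hq : q ∈ Submodule.span A (Set.range fun f : Fin m →₀ ℕ => monomial f (1 : A)) :=
        mono_span q
      refine Submodule.span_induction
        (p := fun x _ => auxPhi m μ c n N a (x * g) = 0) ?_ ?_ ?_ ?_ hq
      · rintro _ ⟨f, rfl⟩; exact hmono f
      · show auxPhi m μ c n N a (0 * g) = 0
        rw [zero_mul, map_zero]
      · intro x y hx' hy' hx hy
        show auxPhi m μ c n N a ((x + y) * g) = 0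
        rw [add_mul, map_add, hx, hy, add_zero]
      · intro r x hx' hx
        show auxPhi m μ c n N a ((r • x) * g) = 0
        rw [smul_mul_assoc, map_smul, hx, smul_zero]
    · intro q
      show auxPhi m μ c n N a (q * 0) = 0
      rw [mul_zero, map_zero]
    · intro x y hx' hy' hx hy q
      show auxPhi m μ c n N a (q * (x + y)) = 0
      rw [mul_add, map_add, hx q, hy q, add_zero]
    · intro r x hx' hx q
      show auxPhi m μ c n N a (q * (r • x)) = 0
      rw [smul_eq_mul, ← mul_assoc, hx]
  have := main 1
  rwa [one_mul] at this

lemma fin_sum_shift {M : Type*} [AddCommMonoid M] (n c : ℕ) (hn : 0 < n) (F : ℕ → M) :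
    (∑ t : Fin n, if c < (t : ℕ) + 1 then F ((t : ℕ) + 1) else 0)
      = ∑ j ∈ Finset.Ioc c n, F j := by
  rw [← Finset.sum_filter]
  refine Finset.sum_nbij' (fun t : Fin n => (t : ℕ) + 1)
    (fun j => (⟨min (j - 1) (n - 1), by omega⟩ : Fin n)) ?_ ?_ ?_ ?_ ?_
  · intro t ht
    rw [Finset.mem_filter] at ht
    have := t.isLt
    rw [Finset.mem_Ioc]
    refine ⟨ht.2, ?_⟩
    show (t : ℕ) + 1 ≤ n
    omega
  · intro j hj
    rw [Finset.mem_Ioc] at hj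
    refine Finset.mem_filter.mpr ⟨Finset.mem_univ _, ?_⟩
    show c < min (j - 1) (n - 1) + 1
    omega
  · intro t ht
    rw [Finset.mem_filter] at ht
    have := t.isLt
    apply Fin.ext
    show min ((t : ℕ) + 1 - 1) (n - 1) = (t : ℕ)
    omega
  · intro j hj
    rw [Finset.mem_Ioc] at hj
    show min (j - 1) (n - 1) + 1 = j
    omega
  · intro t ht
    rfl

lemma sub_mem_ideal {A : Type*} [CommRing A] {m : ℕ} {μ : ℕ → (Fin m →₀ ℕ)}
    {d n : ℕ} {a : ℕ → ℕ → A}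
    (hinj : Set.InjOn μ {i : ℕ | 1 ≤ i})
    (hdeg : ∀ i, 1 ≤ i → i ≤ (d + m).choose m → (μ i).sum (fun _ x => x) ≤ d)
    (hsurj : ∀ f : Fin m →₀ ℕ, f.sum (fun _ x => x) ≤ d →
      ∃ i, 1 ≤ i ∧ i ≤ (d + m).choose m ∧ μ i = f)
    (hcn : (d + m - 1).choose m < n) (hnN : n ≤ (d + m).choose m)
    (p : MvPolynomial (Fin m) A) :
    p - (∑ t : Fin n,
        (auxPhi m μ ((d + m - 1).choose m) n ((d + m).choose m) a p t)
          • monomial (μ ((t : ℕ) + 1)) (1 : A)) ∈ degenIdeal m μ d n a := by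
  set c := (d + m - 1).choose m with hc
  set N := (d + m).choose m with hN
  have hn : 0 < n := by omega
  refine Submodule.span_induction (p := fun x _ => x - (∑ t : Fin n,
      (auxPhi m μ c n N a x t) • monomial (μ ((t : ℕ) + 1)) (1 : A))
        ∈ degenIdeal m μ d n a) ?_ ?_ ?_ ?_ (mono_span p)
  · rintro _ ⟨f, rfl⟩
    by_cases hfd : d < f.sum (fun _ x => x)
    · rw [auxPhi_high hdeg hfd]
      simp only [Pi.zero_apply, zero_smul, Finset.sum_const_zero, sub_zero]
      exact Ideal.subset_span (Or.inl ⟨f, hfd, rfl⟩)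
    · push_neg at hfd
      obtain ⟨i, hi1, hiN, rfl⟩ := hsurj f hfd
      rw [auxPhi_monomial hinj hi1 hiN]
      by_cases hin : i ≤ n
      · have hW : ∀ t : Fin n, auxW c n a i t = if (t : ℕ) + 1 = i then (1 : A) else 0 :=
          fun t => if_pos hin
      -- the sum collapses to the single monomial
        have hsum : (∑ t : Fin n, (auxW c n a i t) • monomial (μ ((t : ℕ) + 1)) (1 : A))
            = monomial (μ i) (1 : A) := by
          have hstep : ∀ t : Fin n,
              (auxW c n a i t) • monomial (μ ((t : ℕ) + 1)) (1 : A)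
                = if t = (⟨i - 1, by omega⟩ : Fin n) then monomial (μ i) (1 : A) else 0 := by
            intro t
            rw [hW t, ite_smul, one_smul, zero_smul]
            have hiff : ((t : ℕ) + 1 = i) ↔ (t = (⟨i - 1, by omega⟩ : Fin n)) := by
              constructor
              · intro h; apply Fin.ext; show (t : ℕ) = i - 1; omega
              · intro h; subst h; show (i - 1) + 1 = i; omega
            rw [if_congr hiff rfl rfl]
            split_ifs with h
            · subst h
              have hvi : ((⟨i - 1, by omega⟩ : Fin n) : ℕ) + 1 = i := by
                show i - 1 + 1 = i; omega
              rw [hvi]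
            · rfl
          rw [Finset.sum_congr rfl (fun t _ => hstep t), Finset.sum_ite_eq' Finset.univ]
          rw [if_pos (Finset.mem_univ _)]
        rw [hsum, sub_self]
        exact Submodule.zero_mem _
      · push_neg at hin
        rw [auxW_high hin]
        have hsum : (∑ t : Fin n,
            (if c < (t : ℕ) + 1 then a i ((t : ℕ) + 1) else 0)
              • monomial (μ ((t : ℕ) + 1)) (1 : A))
            = ∑ j ∈ Finset.Ioc c n, MvPolynomial.C (a i j) * monomial (μ j) (1 : A) := by
          have hstep : ∀ t : Fin n,
              (if c < (t : ℕ) + 1 then a i ((t : ℕ) + 1) else 0)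
                • monomial (μ ((t : ℕ) + 1)) (1 : A)
              = if c < (t : ℕ) + 1
                  then a i ((t : ℕ) + 1) • monomial (μ ((t : ℕ) + 1)) (1 : A) else 0 := by
            intro t
            rw [ite_smul, zero_smul]
          rw [Finset.sum_congr rfl (fun t _ => hstep t),
            fin_sum_shift n c hn (fun j => a i j • monomial (μ j) (1 : A))]
          refine Finset.sum_congr rfl (fun j _ => ?_)
          rw [MvPolynomial.C_mul']
        rw [hsum]
        exact Ideal.subset_span (Or.inr ⟨i, Finset.mem_Ioc.mpr ⟨hin, hiN⟩, rfl⟩)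
  · show (0 : MvPolynomial (Fin m) A) - _ ∈ _
    rw [map_zero]
    simp only [Pi.zero_apply, zero_smul, Finset.sum_const_zero, sub_zero]
    exact Submodule.zero_mem _
  · intro x y hx' hy' hx hy
    show x + y - _ ∈ _
    rw [map_add]
    have : x + y - (∑ t : Fin n,
        ((auxPhi m μ c n N a x + auxPhi m μ c n N a y) t)
          • monomial (μ ((t : ℕ) + 1)) (1 : A))
        = (x - ∑ t : Fin n, (auxPhi m μ c n N a x t) • monomial (μ ((t : ℕ) + 1)) (1 : A))
          + (y - ∑ t : Fin n, (auxPhi m μ c n N a y t) • monomial (μ ((t : ℕ) + 1)) (1 : A)) := by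
      simp only [Pi.add_apply, add_smul, Finset.sum_add_distrib]
      ring
    rw [this]
    exact Submodule.add_mem _ hx hy
  · intro r x hx' hx
    show r • x - _ ∈ _
    rw [map_smul]
    have : r • x - (∑ t : Fin n,
        ((r • auxPhi m μ c n N a x) t) • monomial (μ ((t : ℕ) + 1)) (1 : A))
        = r • (x - ∑ t : Fin n,
            (auxPhi m μ c n N a x t) • monomial (μ ((t : ℕ) + 1)) (1 : A)) := by
      simp only [Pi.smul_apply, smul_assoc, ← Finset.smul_sum, smul_sub]
    rw [this, MvPolynomial.smul_eq_C_mul]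
    exact Ideal.mul_mem_left _ _ hx


/-- Let `A` be a commutative ring, `m ≥ 1`, and `d, n, s` with
`C(d+m−1, m) < n ≤ C(d+m, m)` and `s = C(d+m, m) − n`.  Enumerate the monomials of
`A[Y_1, …, Y_m]` as `m_1, m_2, …` by increasing total degree and lexicographically
within each degree (the enumeration `μ`, `1`-indexed).  Then for every family
`a = (a_{ij})` (`i ∈ {n+1, …, C(d+m,m)}`, `j ∈ {C(d+m−1,m)+1, …, n}`) the images of
`m_1, …, m_n` form a basis of the `A`-module `A[Y_1, …, Y_m]/I_a`, and the assignment
`a ↦ I_a` is injective. -/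
theorem stmt19 {A : Type*} [CommRing A] (m : ℕ) (hm : 1 ≤ m)
    (μ : ℕ → (Fin m →₀ ℕ))
    (hbij : Set.BijOn μ {i : ℕ | 1 ≤ i} Set.univ)
    (hord : ∀ k l : ℕ, 1 ≤ k → k < l →
      (μ k).sum (fun _ e => e) < (μ l).sum (fun _ e => e) ∨
        ((μ k).sum (fun _ e => e) = (μ l).sum (fun _ e => e) ∧
          toLex (μ k) < toLex (μ l)))
    (d n s : ℕ) (h1 : (d + m - 1).choose m < n) (h2 : n ≤ (d + m).choose m)
    (hs : s = (d + m).choose m - n) :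
    (∀ a : ℕ → ℕ → A,
      LinearIndependent A (fun i : Fin n =>
        Ideal.Quotient.mk (degenIdeal m μ d n a)
          (MvPolynomial.monomial (μ ((i : ℕ) + 1)) (1 : A))) ∧
      Submodule.span A (Set.range fun i : Fin n =>
        Ideal.Quotient.mk (degenIdeal m μ d n a)
          (MvPolynomial.monomial (μ ((i : ℕ) + 1)) (1 : A))) = ⊤)
    ∧ ∀ a a' : ℕ → ℕ → A, degenIdeal m μ d n a = degenIdeal m μ d n a' →
        ∀ i ∈ Finset.Ioc n ((d + m).choose m),
          ∀ j ∈ Finset.Ioc ((d + m - 1).choose m) n, a i j = a' i j := by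
  
  have hinj : Set.InjOn μ {i : ℕ | 1 ≤ i} := hbij.injOn
  have hmono : ∀ k l : ℕ, 1 ≤ k → k ≤ l →
      (μ k).sum (fun _ x => x) ≤ (μ l).sum (fun _ x => x) := by
    intro k l hk hkl
    rcases eq_or_lt_of_le hkl with rfl | hlt
    · exact le_rfl
    · rcases hord k l hk hlt with h | h
      · exact le_of_lt h
      · exact le_of_eq h.1
  have hseg := seg_iff μ hbij hmono
  have hdeg : ∀ i, 1 ≤ i → i ≤ (d + m).choose m → (μ i).sum (fun _ x => x) ≤ d :=
    fun i hi1 hiN => (hseg d i hi1).mpr hiN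
  have hsurj : ∀ f : Fin m →₀ ℕ, f.sum (fun _ x => x) ≤ d →
      ∃ i, 1 ≤ i ∧ i ≤ (d + m).choose m ∧ μ i = f := by
    intro f hf
    obtain ⟨i, hi1, rfl⟩ := hbij.surjOn (Set.mem_univ f)
    exact ⟨i, hi1, (hseg d i hi1).mp hf, rfl⟩
  have hdeq : ∀ i, (d + m - 1).choose m < i → i ≤ (d + m).choose m →
      (μ i).sum (fun _ x => x) = d := by
    intro i hci hiN
    have hle := hdeg i (by omega) hiN
    rcases Nat.eq_zero_or_pos d with rfl | hd
    · omega
    · have hc' : (d + m - 1).choose m = ((d - 1) + m).choose m := by congr 1; omega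
      have hiff := hseg (d - 1) i (by omega)
      rw [← hc'] at hiff
      have hnle : ¬ ((μ i).sum (fun _ x => x) ≤ d - 1) := by rw [hiff]; omega
      omega
  set c : ℕ := (d + m - 1).choose m with hc
  set N : ℕ := (d + m).choose m with hN
  have hsm : ∀ (a : ℕ → ℕ → A) (r : A) (x : MvPolynomial (Fin m) A),
      Ideal.Quotient.mk (degenIdeal m μ d n a) (r • x)
        = r • Ideal.Quotient.mk (degenIdeal m μ d n a) x := by
    intro a r x
    rw [← Ideal.Quotient.mkₐ_eq_mk (R₁ := A)]
    exact map_smul (Ideal.Quotient.mkₐ A (degenIdeal m μ d n a)) r x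
  constructor
  · intro a
    constructor
    · rw [Fintype.linearIndependent_iff]
      intro g hg t0
      have hmem : (∑ t : Fin n, g t • monomial (μ ((t : ℕ) + 1)) (1 : A))
          ∈ degenIdeal m μ d n a := by
        rw [← Ideal.Quotient.eq_zero_iff_mem, map_sum,
          Finset.sum_congr rfl (fun t _ => hsm a (g t) _)]
        exact hg
      have hker := mem_ker hinj hdeg hdeq h1 h2 _ hmem
      rw [map_sum] at hker
      have hterm : ∀ t : Fin n,
          auxPhi m μ c n N a (g t • monomial (μ ((t : ℕ) + 1)) (1 : A))
            = g t • auxW c n a ((t : ℕ) + 1) := by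
        intro t
        have := t.isLt
        rw [map_smul, auxPhi_monomial hinj (by omega) (by omega)]
      rw [Finset.sum_congr rfl (fun t _ => hterm t)] at hker
      have hev := congrFun hker t0
      rw [Finset.sum_apply] at hev
      have hstep : ∀ t : Fin n,
          (g t • auxW c n a ((t : ℕ) + 1)) t0 = if t = t0 then g t else 0 := by
        intro t
        have htlt := t.isLt
        simp only [Pi.smul_apply, auxW, if_pos (show (t : ℕ) + 1 ≤ n by omega),
          smul_eq_mul]
        have hiff : ((t0 : ℕ) + 1 = (t : ℕ) + 1) ↔ (t = t0) := by
          constructor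
          · intro h; apply Fin.ext; omega
          · intro h; subst h; rfl
        rw [if_congr hiff rfl rfl]
        split_ifs <;> simp
      rw [Finset.sum_congr rfl (fun t _ => hstep t), Finset.sum_ite_eq' Finset.univ,
        if_pos (Finset.mem_univ _)] at hev
      simpa using hev
    · rw [eq_top_iff]
      rintro x -
      obtain ⟨p, rfl⟩ := Ideal.Quotient.mk_surjective x
      have hsub := sub_mem_ideal (a := a) hinj hdeg hsurj h1 h2 p
      have hkey : Ideal.Quotient.mk (degenIdeal m μ d n a) p
          = ∑ t : Fin n, (auxPhi m μ c n N a p t) •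
              Ideal.Quotient.mk (degenIdeal m μ d n a)
                (monomial (μ ((t : ℕ) + 1)) (1 : A)) := by
        rw [← sub_eq_zero, ← Finset.sum_congr rfl (fun t _ => hsm a _ _), ← map_sum,
          ← map_sub, Ideal.Quotient.eq_zero_iff_mem]
        exact hsub
      rw [hkey]
      exact Submodule.sum_mem _ (fun t _ =>
        Submodule.smul_mem _ _ (Submodule.subset_span ⟨t, rfl⟩))
  · intro a a' hII i hi j hj
    rw [Finset.mem_Ioc] at hi hj
    have hgen : (monomial (μ i) (1 : A) -
        ∑ j' ∈ Finset.Ioc c n, MvPolynomial.C (a' i j') * monomial (μ j') 1)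
          ∈ degenIdeal m μ d n a := by
      rw [hII]
      exact Ideal.subset_span (Or.inr ⟨i, Finset.mem_Ioc.mpr hi, rfl⟩)
    have h0 := mem_ker hinj hdeg hdeq h1 h2 _ hgen
    rw [auxPhi_gen hinj h2 (Finset.mem_Ioc.mpr hi) a'] at h0
    have hev := congrFun h0 (⟨j - 1, by omega⟩ : Fin n)
    have hco : ((⟨j - 1, by omega⟩ : Fin n) : ℕ) + 1 = j := by
      show j - 1 + 1 = j; omega
    simp only [Pi.zero_apply, hco] at hev
    rw [if_pos (by omega)] at hev
    exact sub_eq_zero.mp hev
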